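/- Let e₁ and e₂ be integers with e₂ > e₁ ≥ 0, and define σ : SL(2,k) → SL(4,k) by σ(A) = A^{(p^{e₂})} ⊗ A^{(p^{e₁})}. Then σ is indecomposable: there exist no k-subspaces V₁, V₂ of k⁴ with V₁ ≠ 0, V₂ ≠ 0 and k⁴ = V₁ ⊕ V₂ such that σ(A)·V₁ ⊆ V₁ and σ(A)·V₂ ⊆ V₂ for all A ∈ SL(2,k). -/

import Mathlib

open Matrix Polynomial

lemma scalar4 {k : Type*} [Field k] [Infinite k] (a₀ a₁ a₂ a₃ : k) (n₁ n₂ n₃ : ℕ)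
    (h1 : 0 < n₁) (h2 : n₁ < n₂) (h3 : n₂ < n₃)
    (h : ∀ t : k, a₀ + a₁ * t ^ n₁ + a₂ * t ^ n₂ + a₃ * t ^ n₃ = 0) :
    a₀ = 0 ∧ a₁ = 0 ∧ a₂ = 0 ∧ a₃ = 0 := by
  set P : k[X] := C a₀ + C a₁ * X ^ n₁ + C a₂ * X ^ n₂ + C a₃ * X ^ n₃ with hP
  have hP0 : P = 0 := by
    apply Polynomial.funext
    intro t
    simp [hP, h t]
  have c0 := congrArg (fun Q : k[X] => Q.coeff 0) hP0
  have c1 := congrArg (fun Q : k[X] => Q.coeff n₁) hP0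
  have c2 := congrArg (fun Q : k[X] => Q.coeff n₂) hP0
  have c3 := congrArg (fun Q : k[X] => Q.coeff n₃) hP0
  simp only [hP, coeff_add, coeff_C, coeff_C_mul, coeff_X_pow, coeff_zero] at c0 c1 c2 c3
  have e1 : n₁ ≠ 0 := h1.ne'
  have e2 : n₂ ≠ 0 := (h1.trans h2).ne'
  have e3 : n₃ ≠ 0 := (h1.trans (h2.trans h3)).ne'
  have e12 : n₁ ≠ n₂ := h2.ne
  have e13 : n₁ ≠ n₃ := (h2.trans h3).ne
  have e23 : n₂ ≠ n₃ := h3.ne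
  simp [e1, e2, e3, e12, e13, e23, e1.symm, e2.symm, e3.symm, e12.symm, e13.symm, e23.symm] at c0 c1 c2 c3
  exact ⟨c0, c1, c2, c3⟩

lemma memExt {k : Type*} [Field k] [Infinite k] (W : Submodule k (Fin 4 → k))
    (c₀ c₁ c₂ c₃ : Fin 4 → k) (n₁ n₂ n₃ : ℕ)
    (h1 : 0 < n₁) (h2 : n₁ < n₂) (h3 : n₂ < n₃)
    (h : ∀ t : k, c₀ + t ^ n₁ • c₁ + t ^ n₂ • c₂ + t ^ n₃ • c₃ ∈ W) :
    c₀ ∈ W ∧ c₁ ∈ W ∧ c₂ ∈ W ∧ c₃ ∈ W := by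
  have h0 : c₀ ∈ W := by
    have := h 0
    simpa [zero_pow h1.ne', zero_pow (h1.trans h2).ne',
      zero_pow (h1.trans (h2.trans h3)).ne'] using this
  have key : ∀ i : Fin 3, ![c₁, c₂, c₃] i ∈ W := by
    intro i
    rw [← Submodule.Quotient.mk_eq_zero W,
      ← Module.forall_dual_apply_eq_zero_iff k]
    intro ψ
    have hs := scalar4 (ψ (Submodule.Quotient.mk c₀)) (ψ (Submodule.Quotient.mk c₁))
      (ψ (Submodule.Quotient.mk c₂)) (ψ (Submodule.Quotient.mk c₃)) n₁ n₂ n₃ h1 h2 h3 ?_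
    · fin_cases i
      · exact hs.2.1
      · exact hs.2.2.1
      · exact hs.2.2.2
    · intro t
      have hz : (Submodule.Quotient.mk (c₀ + t ^ n₁ • c₁ + t ^ n₂ • c₂ + t ^ n₃ • c₃) :
          (Fin 4 → k) ⧸ W) = 0 := (Submodule.Quotient.mk_eq_zero W).2 (h t)
      have : ψ (Submodule.Quotient.mk (c₀ + t ^ n₁ • c₁ + t ^ n₂ • c₂ + t ^ n₃ • c₃) :
          (Fin 4 → k) ⧸ W) = 0 := by rw [hz]; simp
      simpa [Submodule.Quotient.mk_add, Submodule.Quotient.mk_smul, map_add, _root_.map_smul,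
        smul_eq_mul, mul_comm] using this
  exact ⟨h0, key 0, key 1, key 2⟩

/-- Entrywise `m`-th power of a 2×2 matrix: `A^{(m)} = [[a^m, b^m],[c^m, d^m]]`. -/
noncomputable def entryPow {k : Type*} [Field k] (A : Matrix (Fin 2) (Fin 2) k) (m : ℕ) :
    Matrix (Fin 2) (Fin 2) k :=
  Matrix.of fun i j => A i j ^ m

/-- The Kronecker product of two 2×2 matrices as a 4×4 matrix in 2×2 blocks. -/
noncomputable def kron4 {k : Type*} [Field k] (X Y : Matrix (Fin 2) (Fin 2) k) :
    Matrix (Fin 4) (Fin 4) k :=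
  !![X 0 0 * Y 0 0, X 0 0 * Y 0 1, X 0 1 * Y 0 0, X 0 1 * Y 0 1;
     X 0 0 * Y 1 0, X 0 0 * Y 1 1, X 0 1 * Y 1 0, X 0 1 * Y 1 1;
     X 1 0 * Y 0 0, X 1 0 * Y 0 1, X 1 1 * Y 0 0, X 1 1 * Y 0 1;
     X 1 0 * Y 1 0, X 1 0 * Y 1 1, X 1 1 * Y 1 0, X 1 1 * Y 1 1]

lemma step {k : Type*} [Field k] [Infinite k] {p : ℕ} (hp : 1 < p)
    (e₁ e₂ : ℕ) (h : e₁ < e₂) (W : Submodule k (Fin 4 → k))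
    (hW : ∀ A : SpecialLinearGroup (Fin 2) k, ∀ v ∈ W,
      kron4 (entryPow A.1 (p ^ e₂)) (entryPow A.1 (p ^ e₁)) *ᵥ v ∈ W)
    (v : Fin 4 → k) (hv : v ∈ W) :
    ![v 1, 0, v 3, 0] ∈ W ∧ ![v 2, v 3, 0, 0] ∈ W ∧ ![v 3, 0, 0, 0] ∈ W ∧
    ![0, v 0, 0, v 2] ∈ W ∧ ![0, 0, v 0, v 1] ∈ W ∧ ![0, 0, 0, v 0] ∈ W := by
  set q := p ^ e₁ with hq
  set Q := p ^ e₂ with hQ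
  have hq0 : 0 < q := Nat.pow_pos (Nat.lt_of_lt_of_le Nat.zero_lt_one hp.le)
  have hqQ : q < Q := Nat.pow_lt_pow_right hp h
  have hQ0 : Q ≠ 0 := (hq0.trans hqQ).ne'
  have hQQq : Q < Q + q := Nat.lt_add_of_pos_right hq0
  -- upper unipotent
  have hu : ∀ t : k, v + t ^ q • ![v 1, 0, v 3, 0] + t ^ Q • ![v 2, v 3, 0, 0]
      + t ^ (Q + q) • ![v 3, 0, 0, 0] ∈ W := by
    intro t
    have hdet : (!![1, t; 0, 1] : Matrix (Fin 2) (Fin 2) k).det = 1 := by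
      simp [Matrix.det_fin_two_of]
    have := hW ⟨!![1, t; 0, 1], hdet⟩ v hv
    convert this using 1
    funext i
    fin_cases i <;>
      simp [kron4, entryPow, Matrix.mulVec, dotProduct, Fin.sum_univ_four,
        zero_pow hQ0, zero_pow hq0.ne', pow_add, Matrix.vecHead, Matrix.vecTail, Function.comp, show (Fin.succ 2 : Fin 4) = 3 from rfl] <;> ring_nf
  -- lower unipotent
  have hl : ∀ t : k, v + t ^ q • ![0, v 0, 0, v 2] + t ^ Q • ![0, 0, v 0, v 1]
      + t ^ (Q + q) • ![0, 0, 0, v 0] ∈ W := by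
    intro t
    have hdet : (!![1, 0; t, 1] : Matrix (Fin 2) (Fin 2) k).det = 1 := by
      simp [Matrix.det_fin_two_of]
    have := hW ⟨!![1, 0; t, 1], hdet⟩ v hv
    convert this using 1
    funext i
    fin_cases i <;>
      simp [kron4, entryPow, Matrix.mulVec, dotProduct, Fin.sum_univ_four,
        zero_pow hQ0, zero_pow hq0.ne', pow_add, Matrix.vecHead, Matrix.vecTail, Function.comp, show (Fin.succ 2 : Fin 4) = 3 from rfl] <;> ring_nf
  obtain ⟨-, u1, u2, u3⟩ := memExt W v _ _ _ q Q (Q + q) hq0 hqQ hQQq hu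
  obtain ⟨-, l1, l2, l3⟩ := memExt W v _ _ _ q Q (Q + q) hq0 hqQ hQQq hl
  exact ⟨u1, u2, u3, l1, l2, l3⟩

/-- The Kronecker-product homomorphism
`σ(A) = A^{(p^{e₂})} ⊗ A^{(p^{e₁})}` (with `e₂ > e₁ ≥ 0`) is indecomposable: `k⁴` admits
no direct sum decomposition into two nonzero `σ`-invariant subspaces. -/
theorem stmt19 {k : Type*} [Field k] [IsAlgClosed k] {p : ℕ} [Fact p.Prime] [CharP k p]
    (e₁ e₂ : ℕ) (h : e₁ < e₂) :
    ¬∃ V₁ V₂ : Submodule k (Fin 4 → k),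
      V₁ ≠ ⊥ ∧ V₂ ≠ ⊥ ∧ IsCompl V₁ V₂ ∧
        (∀ A : SpecialLinearGroup (Fin 2) k, ∀ v ∈ V₁,
          kron4 (entryPow A.1 (p ^ e₂)) (entryPow A.1 (p ^ e₁)) *ᵥ v ∈ V₁) ∧
        ∀ A : SpecialLinearGroup (Fin 2) k, ∀ v ∈ V₂,
          kron4 (entryPow A.1 (p ^ e₂)) (entryPow A.1 (p ^ e₁)) *ᵥ v ∈ V₂ := by
  rintro ⟨V₁, V₂, hV₁, hV₂, hc, hI₁, -⟩
  have hp : 1 < p := (Fact.out : p.Prime).one_lt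
  obtain ⟨v, hvV, hv0⟩ := Submodule.exists_mem_ne_zero_of_ne_bot hV₁
  -- first show e₃ = ![0,0,0,1] ∈ V₁
  have he3 : ![(0:k), 0, 0, 1] ∈ V₁ := by
    have hstep := step hp e₁ e₂ h V₁ hI₁
    obtain ⟨i, hi⟩ : ∃ i, v i ≠ 0 := by
      by_contra hcon
      push_neg at hcon
      exact hv0 (funext hcon)
    have scale : ∀ (c : k), c ≠ 0 → ![(0:k),0,0,c] ∈ V₁ → ![(0:k),0,0,1] ∈ V₁ := by
      intro c hc0 hmem
      have := V₁.smul_mem c⁻¹ hmem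
      convert this using 1
      funext j
      fin_cases j <;> simp [hc0]
    fin_cases i
    · -- v 0 ≠ 0
      exact scale _ hi (hstep v hvV).2.2.2.2.2
    · -- v 1 ≠ 0 : w = ![0,0,v 0,v 1] ∈ V₁, then U1 w = ![w 1, 0, w 3, 0] = ![0,0,v 1,0]
      have hw : ![(0:k), 0, v 0, v 1] ∈ V₁ := (hstep v hvV).2.2.2.2.1
      have hw2 := (hstep _ hw).1
      simp only [Matrix.cons_val_one, Matrix.head_cons, Matrix.cons_val_three,
        Matrix.cons_val_zero] at hw2
      -- hw2 : ![0, 0, v 1, 0] ∈ V₁ ; scale to e₂ := ![0,0,1,0]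
      have hi' : v 1 ≠ 0 := hi
      have he2 : ![(0:k),0,1,0] ∈ V₁ := by
        have := V₁.smul_mem (v 1)⁻¹ hw2
        convert this using 1
        funext j
        fin_cases j <;> simp [hi']
      -- L1 e₂ = ![0, e₂ 0, 0, e₂ 2] = ![0,0,0,1]
      have := (hstep _ he2).2.2.2.1
      simpa using this
    · -- v 2 ≠ 0 : w = ![0, v 0, 0, v 2] ∈ V₁, U2 w = ![w 2, w 3, 0,0] = ![0, v 2, 0, 0]
      have hw : ![(0:k), v 0, 0, v 2] ∈ V₁ := (hstep v hvV).2.2.2.1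
      have hw2 := (hstep _ hw).2.1
      simp only [Matrix.cons_val_two, Matrix.cons_val_three, Matrix.tail_cons,
        Matrix.head_cons, Matrix.cons_val_zero] at hw2
      have hi' : v 2 ≠ 0 := hi
      have he1 : ![(0:k),1,0,0] ∈ V₁ := by
        have := V₁.smul_mem (v 2)⁻¹ hw2
        convert this using 1
        funext j
        fin_cases j <;> simp [hi']
      -- L2 e₁ = ![0,0, e₁ 0, e₁ 1] = ![0,0,0,1]
      have := (hstep _ he1).2.2.2.2.1
      simpa using this
    · -- v 3 ≠ 0 : U3 v = ![v 3, 0,0,0]; scale to e₀; then L3 e₀ = ![0,0,0,1]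
      have hw : ![v 3, (0:k), 0, 0] ∈ V₁ := (hstep v hvV).2.2.1
      have hi' : v 3 ≠ 0 := hi
      have he0 : ![(1:k),0,0,0] ∈ V₁ := by
        have := V₁.smul_mem (v 3)⁻¹ hw
        convert this using 1
        funext j
        fin_cases j <;> simp [hi']
      have := (hstep _ he0).2.2.2.2.2
      simpa using this
  -- from e₃, get all basis vectors
  have hstep := step hp e₁ e₂ h V₁ hI₁
  have he2 : ![(0:k),0,1,0] ∈ V₁ := by simpa using (hstep _ he3).1
  have he1 : ![(0:k),1,0,0] ∈ V₁ := by simpa using (hstep _ he3).2.1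
  have he0 : ![(1:k),0,0,0] ∈ V₁ := by simpa using (hstep _ he3).2.2.1
  have htop : V₁ = ⊤ := by
    rw [eq_top_iff]
    intro x _
    have hx : x = x 0 • ![(1:k),0,0,0] + x 1 • ![(0:k),1,0,0] + x 2 • ![(0:k),0,1,0]
        + x 3 • ![(0:k),0,0,1] := by
      funext j
      fin_cases j <;> simp
    rw [hx]
    exact V₁.add_mem (V₁.add_mem (V₁.add_mem (V₁.smul_mem _ he0) (V₁.smul_mem _ he1))
      (V₁.smul_mem _ he2)) (V₁.smul_mem _ he3)
  have := hc.disjoint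
  rw [htop] at this
  exact hV₂ (disjoint_comm.mp this |>.eq_bot_of_le le_top)
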